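/- Σ_{n=1}^{∞} ζ(2n)·n/4^n = π²/16. -/

import Mathlib

open Real

/-- Real Riemann zeta values via the series `∑ 1/k^m`. -/
noncomputable def zetaR (m : ℕ) : ℝ := ∑' k : ℕ, 1 / ((k : ℝ) + 1) ^ m

lemma summable_shift_sq : Summable (fun k : ℕ => 1 / ((k : ℝ) + 1) ^ 2) := by
  have := (summable_nat_add_iff 1).2
    (Real.summable_one_div_nat_pow.2 (by norm_num : 1 < 2))
  refine this.congr fun n => by push_cast; ring

lemma summable_odd_sq : Summable (fun k : ℕ => 1 / ((2 * (k : ℝ) + 1)) ^ 2) := by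
  refine summable_shift_sq.of_nonneg_of_le (fun k => by positivity) (fun k => ?_)
  apply one_div_le_one_div_of_le (by positivity)
  nlinarith [Nat.cast_nonneg (α := ℝ) k]

lemma hasSum_odd_sq : HasSum (fun k : ℕ => 1 / ((2 * (k : ℝ) + 1)) ^ 2) (π ^ 2 / 8) := by
  have htot := hasSum_zeta_two
  have heven' : HasSum (fun k : ℕ => 1 / (((2 * k : ℕ) : ℝ)) ^ 2) (π ^ 2 / 24) := by
    have h := htot.mul_left (1 / 4)
    have hv : (1:ℝ) / 4 * (π ^ 2 / 6) = π ^ 2 / 24 := by ring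
    rw [hv] at h
    refine h.congr_fun fun k => ?_
    rcases Nat.eq_zero_or_pos k with hk | hk
    · simp [hk]
    · have hne : (k : ℝ) ≠ 0 := Nat.cast_ne_zero.2 hk.ne'
      push_cast
      field_simp
      ring
  have hodd := summable_odd_sq.hasSum
  have hodd' : HasSum (fun k : ℕ => 1 / (((2 * k + 1 : ℕ) : ℝ)) ^ 2)
      (∑' k : ℕ, 1 / ((2 * (k : ℝ) + 1)) ^ 2) :=
    hodd.congr_fun fun k => by push_cast; ring_nf
  have hsplit := heven'.even_add_odd (f := fun n : ℕ => 1 / (n : ℝ) ^ 2) hodd'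
  have h2 := htot.unique hsplit
  have h3 : ∑' k : ℕ, 1 / ((2 * (k : ℝ) + 1)) ^ 2 = π ^ 2 / 8 := by linarith
  exact h3 ▸ summable_odd_sq.hasSum

lemma hasSum_odd3_sq :
    HasSum (fun k : ℕ => 1 / ((2 * (k : ℝ) + 3)) ^ 2) (π ^ 2 / 8 - 1) := by
  have h := (hasSum_nat_add_iff' (f := fun k : ℕ => 1 / ((2 * (k : ℝ) + 1)) ^ 2)
    (g := π ^ 2 / 8) 1).2 hasSum_odd_sq
  have hval : π ^ 2 / 8 - ∑ i ∈ Finset.range 1, 1 / ((2 * (i : ℝ) + 1)) ^ 2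
      = π ^ 2 / 8 - 1 := by norm_num
  rw [hval] at h
  refine h.congr_fun fun k => ?_
  push_cast; ring_nf

lemma hasSum_telescope :
    HasSum (fun k : ℕ => 1 / (2 * (k : ℝ) + 1) - 1 / (2 * (k : ℝ) + 3)) 1 := by
  set g : ℕ → ℝ := fun k => 1 / (2 * (k : ℝ) + 1) with hg
  have hsum : Summable (fun k : ℕ => g k - g (k + 1)) := by
    apply Summable.of_nonneg_of_le ?_ ?_ (summable_odd_sq.mul_left 2)
    · intro k
      have h1 : (0:ℝ) < 2 * (k : ℝ) + 1 := by positivity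
      have hle : g (k + 1) ≤ g k := by
        simp only [hg]
        apply one_div_le_one_div_of_le (by positivity)
        push_cast; linarith
      linarith
    · intro k
      have h1 : (0:ℝ) < 2 * (k : ℝ) + 1 := by positivity
      have h3 : (0:ℝ) < 2 * ((k : ℝ) + 1) + 1 := by positivity
      simp only [hg]
      push_cast
      rw [div_sub_div _ _ h1.ne' h3.ne', div_le_iff₀ (by positivity)]
      have hrw : 2 * (1 / (2 * (k:ℝ) + 1) ^ 2) * ((2 * (k:ℝ) + 1) * (2 * ((k:ℝ) + 1) + 1))
          = 2 * (2 * ((k:ℝ) + 1) + 1) / (2 * (k:ℝ) + 1) := by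
        field_simp
      rw [hrw, le_div_iff₀ h1]
      nlinarith
  have hps := hsum.hasSum.tendsto_sum_nat
  have hval : ∀ n : ℕ, ∑ i ∈ Finset.range n, (g i - g (i + 1)) = g 0 - g n :=
    fun n => Finset.sum_range_sub' g n
  have hgl : Filter.Tendsto g Filter.atTop (nhds 0) := by
    have ht : Filter.Tendsto (fun k : ℕ => 2 * (k : ℝ) + 1) Filter.atTop Filter.atTop := by
      apply Filter.tendsto_atTop_add_const_right
      exact (tendsto_natCast_atTop_atTop (R := ℝ)).const_mul_atTop (by norm_num)
    simpa [hg, one_div, Pi.inv_def] using ht.inv_tendsto_atTop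
  have hlim : Filter.Tendsto (fun n => ∑ i ∈ Finset.range n, (g i - g (i + 1)))
      Filter.atTop (nhds 1) := by
    simp only [hval]
    have := (tendsto_const_nhds (x := g 0) (f := Filter.atTop (α := ℕ))).sub hgl
    simpa [hg] using this
  have heq : ∑' k, (g k - g (k + 1)) = 1 := tendsto_nhds_unique hps hlim
  have hfinal := heq ▸ hsum.hasSum
  refine hfinal.congr_fun fun k => ?_
  simp only [hg]
  push_cast
  ring_nf

lemma hasSum_main_term :
    HasSum (fun k : ℕ => 4 * ((k : ℝ) + 1) ^ 2 /
      ((2 * (k : ℝ) + 1) ^ 2 * (2 * (k : ℝ) + 3) ^ 2)) (π ^ 2 / 16) := by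
  have hA := hasSum_odd_sq.mul_left ((1:ℝ)/4)
  have hB := hasSum_odd3_sq.mul_left ((1:ℝ)/4)
  have hC := hasSum_telescope.mul_left ((1:ℝ)/4)
  have h := (hA.add hB).add hC
  have hval : (1:ℝ) / 4 * (π ^ 2 / 8) + 1 / 4 * (π ^ 2 / 8 - 1) + 1 / 4 * 1 = π ^ 2 / 16 := by
    ring
  rw [hval] at h
  refine h.congr_fun fun k => ?_
  have h1 : (0:ℝ) < 2 * (k : ℝ) + 1 := by positivity
  have h3 : (0:ℝ) < 2 * (k : ℝ) + 3 := by positivity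
  field_simp
  ring

set_option maxHeartbeats 2000000 in
theorem zeta_series_four_n :
    ∑' n : ℕ, zetaR (2 * (n + 1)) * ((n : ℝ) + 1) / 4 ^ (n + 1) = π ^ 2 / 16 := by
  classical
  set f : ℕ → ℕ → ℝ :=
    fun n k => ((n : ℝ) + 1) * (1 / (4 * ((k : ℝ) + 1) ^ 2)) ^ (n + 1) with hf
  have hg : Summable (fun n : ℕ => ((n : ℝ) + 1) * (1 / 4 : ℝ) ^ (n + 1)) := by
    have h0 := summable_pow_mul_geometric_of_norm_lt_one (R := ℝ) 1 (r := 1/4) (by norm_num)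
    have h2 := (summable_nat_add_iff 1).2 h0
    refine h2.congr fun n => ?_
    push_cast; ring
  have hprod : Summable (fun p : ℕ × ℕ =>
      (((p.1 : ℝ) + 1) * (1 / 4 : ℝ) ^ (p.1 + 1)) * (1 / ((p.2 : ℝ) + 1) ^ 2)) :=
    hg.mul_of_nonneg summable_shift_sq (fun n => by positivity) (fun k => by positivity)
  have huncurry : Summable (Function.uncurry f) := by
    refine Summable.of_nonneg_of_le ?_ ?_ hprod
    · intro p; simp only [Function.uncurry, hf]; positivity
    · rintro ⟨n, k⟩
      simp only [Function.uncurry, hf]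
      have hk1 : (0:ℝ) < (k : ℝ) + 1 := by positivity
      have key : (1 / (4 * ((k : ℝ) + 1) ^ 2)) ^ (n + 1)
          ≤ (1 / 4 : ℝ) ^ (n + 1) * (1 / ((k : ℝ) + 1) ^ 2) := by
        rw [show (1 : ℝ) / (4 * ((k : ℝ) + 1) ^ 2)
            = (1 / 4) * (1 / ((k : ℝ) + 1) ^ 2) by field_simp, mul_pow]
        refine mul_le_mul_of_nonneg_left ?_ (by positivity)
        have h01 : (0:ℝ) ≤ 1 / ((k : ℝ) + 1) ^ 2 := by positivity
        have h11 : 1 / ((k : ℝ) + 1) ^ 2 ≤ 1 := by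
          rw [div_le_one (by positivity)]
          nlinarith [Nat.cast_nonneg (α := ℝ) k]
        exact pow_le_of_le_one h01 h11 (Nat.succ_ne_zero n)
      calc ((n : ℝ) + 1) * (1 / (4 * ((k : ℝ) + 1) ^ 2)) ^ (n + 1)
          ≤ ((n : ℝ) + 1) * ((1 / 4 : ℝ) ^ (n + 1) * (1 / ((k : ℝ) + 1) ^ 2)) := by
            have hn : (0:ℝ) ≤ (n : ℝ) + 1 := by positivity
            exact mul_le_mul_of_nonneg_left key hn
        _ = (((n : ℝ) + 1) * (1 / 4 : ℝ) ^ (n + 1)) * (1 / ((k : ℝ) + 1) ^ 2) := by ring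
  have hterm : ∀ n : ℕ,
      zetaR (2 * (n + 1)) * ((n : ℝ) + 1) / 4 ^ (n + 1) = ∑' k, f n k := by
    intro n
    rw [zetaR]
    rw [show (∑' k : ℕ, 1 / ((k : ℝ) + 1) ^ (2 * (n + 1))) * ((n : ℝ) + 1) / 4 ^ (n + 1)
        = ∑' k : ℕ, (1 / ((k : ℝ) + 1) ^ (2 * (n + 1))) * (((n : ℝ) + 1) / 4 ^ (n + 1)) by
      rw [tsum_mul_right]; ring]
    refine tsum_congr fun k => ?_
    have hk1 : ((k : ℝ) + 1) ≠ 0 := by positivity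
    simp only [hf]
    rw [pow_mul, div_pow, one_pow, mul_pow]
    rw [div_mul_div_comm, one_mul]
    ring
  rw [tsum_congr hterm, ← Summable.tsum_comm huncurry]
  have hinner : ∀ k : ℕ, (∑' n, f n k)
      = 4 * ((k : ℝ) + 1) ^ 2 / ((2 * (k : ℝ) + 1) ^ 2 * (2 * (k : ℝ) + 3) ^ 2) := by
    intro k
    set r : ℝ := 1 / (4 * ((k : ℝ) + 1) ^ 2) with hr
    have hk1 : (0:ℝ) < (k : ℝ) + 1 := by positivity
    have hr0 : 0 < r := by positivity
    have hr1 : r < 1 := by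
      rw [hr, div_lt_one (by positivity)]
      nlinarith
    have hnorm : ‖r‖ < 1 := by rw [Real.norm_eq_abs, abs_of_pos hr0]; exact hr1
    have hgeo := tsum_coe_mul_geometric_of_norm_lt_one hnorm
    have hsum : Summable (fun n : ℕ => (n : ℝ) * r ^ n) := by
      have := summable_pow_mul_geometric_of_norm_lt_one (R := ℝ) 1 hnorm
      exact this.congr fun n => by push_cast; ring
    have hshift := Summable.tsum_eq_zero_add hsum
    simp only [Nat.cast_zero, pow_zero, zero_mul, zero_add] at hshift
    have heq : (∑' n, f n k) = r / (1 - r) ^ 2 := by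
      rw [← hgeo, hshift]
      exact tsum_congr fun n => by simp only [hf]; push_cast; ring
    rw [heq]
    have h1 : (0:ℝ) < 2 * (k : ℝ) + 1 := by positivity
    have h3 : (0:ℝ) < 2 * (k : ℝ) + 3 := by positivity
    have h1r : 1 - r = ((2 * (k : ℝ) + 1) * (2 * (k : ℝ) + 3)) / (4 * ((k : ℝ) + 1) ^ 2) := by
      rw [hr]; field_simp; ring
    rw [h1r, hr]
    rw [div_pow, div_div_eq_mul_div, div_mul_eq_mul_div, div_div]
    rw [div_eq_div_iff (by positivity) (by positivity)]
    ring
  rw [tsum_congr hinner]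
  exact hasSum_main_term.tsum_eq
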